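/- Let G be a finitely generated group, p a prime, I a nonempty totally ordered set, and (N_i)_{i ∈ I} a family of normal subgroups of G with N_i ⊆ N_j whenever i ≤ j. Let N = ⋃_{i ∈ I} N_i. Then limsup_{i ∈ I} RG_p(G/N_i) ≤ RG_p(G/N), where the limsup is taken along the atTop filter on I. -/

import Mathlib

/-- `dGen G` is the minimal number of generators of the group `G`. -/
noncomputable def dGen (G : Type*) [Group G] : ℕ :=
  sInf {n : ℕ | ∃ S : Finset G, S.card = n ∧ Subgroup.closure (S : Set G) = ⊤}

/-- The rank gradient of `G`. -/
noncomputable def rankGradient (G : Type*) [Group G] : ℝ :=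
  sInf {r : ℝ | ∃ H : Subgroup G, H.index ≠ 0 ∧ r = ((dGen H : ℝ) - 1) / (H.index : ℝ)}

open scoped commutatorElement

/-- The subgroup `[G,G]G^p` of `G` (as a normal closure of its generators). -/
def pCommPow (p : ℕ) (G : Type*) [Group G] : Subgroup G :=
  Subgroup.normalClosure ({x | ∃ a b : G, x = ⁅a, b⁆} ∪ {x | ∃ g : G, x = g ^ p})

instance pCommPow_normal (p : ℕ) (G : Type*) [Group G] : (pCommPow p G).Normal :=
  Subgroup.normalClosure_normal

/-- `d_p(G) = d(G/([G,G]G^p))`. -/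
noncomputable def dp (p : ℕ) (G : Type*) [Group G] : ℕ :=
  dGen (G ⧸ pCommPow p G)

/-- The `p`-gradient of `G`. -/
noncomputable def pGradient (p : ℕ) (G : Type*) [Group G] : ℝ :=
  sInf {r : ℝ | ∃ H : Subgroup G, H.Normal ∧ (∃ k : ℕ, H.index = p ^ k) ∧
    r = ((dp p H : ℝ) - 1) / (H.index : ℝ)}

/-- The `p`-residual: intersection of all normal subgroups of `p`-power index. -/
def pResidual (p : ℕ) (G : Type*) [Group G] : Subgroup G :=
  ⨅ H ∈ {H : Subgroup G | H.Normal ∧ ∃ k : ℕ, H.index = p ^ k}, H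

instance pResidual_normal (p : ℕ) (G : Type*) [Group G] : (pResidual p G).Normal := by
  constructor
  intro n hn g
  simp only [pResidual, Subgroup.mem_iInf] at hn ⊢
  intro H hH
  exact hH.1.conj_mem n (hn H hH) g


open Subgroup

section Aux

variable {G₁ : Type*} {G₂ : Type*} [Group G₁] [Group G₂]

lemma dGen_le_card {S : Finset G₁} (hS : Subgroup.closure (S : Set G₁) = ⊤) :
    dGen G₁ ≤ S.card :=
  Nat.sInf_le ⟨S, rfl, hS⟩

lemma dGen_eq_rank (G : Type*) [Group G] [Group.FG G] : dGen G = Group.rank G := by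
  refine le_antisymm ?_ ?_
  · obtain ⟨S, h1, h2⟩ := Group.rank_spec G
    exact h1 ▸ dGen_le_card h2
  · have hne : {n : ℕ | ∃ S : Finset G, S.card = n ∧ Subgroup.closure (S : Set G) = ⊤}.Nonempty := by
      obtain ⟨S, h1, h2⟩ := Group.rank_spec G
      exact ⟨S.card, S, rfl, h2⟩
    obtain ⟨S, h1, h2⟩ := Nat.sInf_mem hne
    exact le_of_le_of_eq (Group.rank_le h2) h1

lemma dGen_aux (e : G₁ ≃* G₂) :
    ∀ n, n ∈ {n : ℕ | ∃ S : Finset G₁, S.card = n ∧ Subgroup.closure (S : Set G₁) = ⊤} →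
      n ∈ {n : ℕ | ∃ S : Finset G₂, S.card = n ∧ Subgroup.closure (S : Set G₂) = ⊤} := by
  classical
  rintro n ⟨S, rfl, hS⟩
  refine ⟨S.image e, Finset.card_image_of_injective _ e.injective, ?_⟩
  have hc : (⇑e '' (S : Set G₁)) = ⇑e.toMonoidHom '' (S : Set G₁) := rfl
  rw [Finset.coe_image, hc, ← MonoidHom.map_closure e.toMonoidHom, hS,
    Subgroup.map_top_of_surjective _ e.surjective]

lemma dGen_congr (e : G₁ ≃* G₂) : dGen G₁ = dGen G₂ := by
  unfold dGen
  congr 1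
  exact Set.eq_of_subset_of_subset (dGen_aux e) (dGen_aux e.symm)

lemma pCommPow_map (p : ℕ) (f : G₁ →* G₂) (hf : Function.Surjective f) :
    (pCommPow p G₁).map f = pCommPow p G₂ := by
  rw [pCommPow, pCommPow, Subgroup.map_normalClosure _ _ hf]
  congr 1
  ext x
  constructor
  · rintro ⟨y, hy | hy, rfl⟩
    · obtain ⟨a, b, rfl⟩ := hy
      exact Or.inl ⟨f a, f b, map_commutatorElement f a b⟩
    · obtain ⟨g, rfl⟩ := hy
      exact Or.inr ⟨f g, (map_pow f g p)⟩
  · rintro (⟨a, b, rfl⟩ | ⟨g, rfl⟩)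
    · obtain ⟨a', rfl⟩ := hf a
      obtain ⟨b', rfl⟩ := hf b
      exact ⟨⁅a', b'⁆, Or.inl ⟨a', b', rfl⟩, map_commutatorElement f a' b'⟩
    · obtain ⟨g', rfl⟩ := hf g
      exact ⟨g' ^ p, Or.inr ⟨g', rfl⟩, map_pow f g' p⟩

lemma dp_congr (p : ℕ) (e : G₁ ≃* G₂) : dp p G₁ = dp p G₂ :=
  dGen_congr (QuotientGroup.congr _ _ e (pCommPow_map p e.toMonoidHom e.surjective))

/-- `dp` of a quotient as `dGen` of a quotient of the ambient group. -/
lemma dp_quot (p : ℕ) (K : Subgroup G₁) [K.Normal] :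
    dp p (G₁ ⧸ K) = dGen (G₁ ⧸ (pCommPow p G₁ ⊔ K)) := by
  haveI : (pCommPow p G₁ ⊔ K).Normal := Subgroup.sup_normal _ _
  have hmap : Subgroup.map (QuotientGroup.mk' K) (pCommPow p G₁ ⊔ K)
      = pCommPow p (G₁ ⧸ K) := by
    rw [Subgroup.map_sup, pCommPow_map p _ (QuotientGroup.mk'_surjective K),
      (Subgroup.map_eq_bot_iff K).2 (le_of_eq (QuotientGroup.ker_mk' K).symm), sup_bot_eq]
  have e : (G₁ ⧸ K) ⧸ pCommPow p (G₁ ⧸ K)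
      ≃* G₁ ⧸ (pCommPow p G₁ ⊔ K) := by
    refine (QuotientGroup.quotientMulEquivOfEq hmap.symm).trans ?_
    exact QuotientGroup.quotientQuotientEquivQuotient K (pCommPow p G₁ ⊔ K) le_sup_right
  exact dGen_congr e

end Aux

lemma core_exists {M : Type*} [Group M] [Group.FG M] {I : Type*} [LinearOrder I] [Nonempty I]
    (A : Subgroup M) [A.Normal] (nf : I → Subgroup M) (hn : ∀ i, (nf i).Normal)
    (hmono : ∀ i j, i ≤ j → nf i ≤ nf j) (n : Subgroup M) [n.Normal]
    (hcup : ∀ x : M, x ∈ n ↔ ∃ i, x ∈ nf i) :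
    ∃ i₀ : I, ∀ i ≥ i₀, dGen (M ⧸ (A ⊔ nf i)) ≤ dGen (M ⧸ (A ⊔ n)) := by
  classical
  haveI : (A ⊔ n).Normal := Subgroup.sup_normal _ _
  haveI : Group.FG (M ⧸ (A ⊔ n)) := Group.fg_of_surjective (QuotientGroup.mk'_surjective _)
  obtain ⟨S, hScard, hStop⟩ := Group.rank_spec (M ⧸ (A ⊔ n))
  set T : Finset M := S.image Quotient.out with hT
  have hTS : T.image (QuotientGroup.mk' (A ⊔ n)) = S := by
    rw [hT, Finset.image_image]
    have h1 : S.image ((QuotientGroup.mk' (A ⊔ n)) ∘ Quotient.out) = S.image id :=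
      Finset.image_congr (fun q _ => QuotientGroup.out_eq' q)
    rw [h1, Finset.image_id]
  have hmapX : Subgroup.map (QuotientGroup.mk' (A ⊔ n))
      (Subgroup.closure (T : Set M) ⊔ (A ⊔ n)) = ⊤ := by
    rw [eq_top_iff, ← hStop]
    have h2 : Subgroup.closure (S : Set (M ⧸ (A ⊔ n)))
        ≤ Subgroup.map (QuotientGroup.mk' (A ⊔ n)) (Subgroup.closure (T : Set M)) := by
      rw [MonoidHom.map_closure]
      apply Subgroup.closure_mono
      rw [← Finset.coe_image, hTS]
    exact h2.trans (Subgroup.map_mono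
      (le_sup_left : Subgroup.closure (T : Set M) ≤ Subgroup.closure (T : Set M) ⊔ (A ⊔ n)))
  have hXtop : Subgroup.closure (T : Set M) ⊔ (A ⊔ n) = ⊤ := by
    have h2 := Subgroup.comap_map_eq (QuotientGroup.mk' (A ⊔ n))
      (Subgroup.closure (T : Set M) ⊔ (A ⊔ n))
    rw [hmapX, Subgroup.comap_top, QuotientGroup.ker_mk'] at h2
    rw [sup_assoc, sup_idem] at h2
    exact h2.symm
  set C := Subgroup.closure (T : Set M) ⊔ A with hC
  have hCn : C ⊔ n = ⊤ := by rw [hC, sup_assoc]; exact hXtop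
  set D : I → Subgroup M := fun i => C ⊔ nf i with hD
  have hdir : Directed (· ≤ ·) D := fun i j =>
    ⟨max i j, sup_le_sup_left (hmono _ _ (le_max_left i j)) C,
      sup_le_sup_left (hmono _ _ (le_max_right i j)) C⟩
  have htop : (⊤ : Subgroup M) ≤ ⨆ i, D i := by
    rw [← hCn]
    refine sup_le (le_trans le_sup_left (le_iSup D (Classical.arbitrary I))) ?_
    intro x hx
    obtain ⟨i, hi⟩ := (hcup x).1 hx
    exact (le_trans le_sup_right (le_iSup D i) : nf i ≤ _) hi
  have hex : ∀ w : M, ∃ i, w ∈ D i := fun w =>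
    (Subgroup.mem_iSup_of_directed hdir).1 (htop (Subgroup.mem_top w))
  choose F hF using hex
  obtain ⟨W, _, hWtop⟩ := Group.rank_spec M
  obtain ⟨i₀, hi₀⟩ := Finset.exists_le (W.image F)
  refine ⟨i₀, fun i hi => ?_⟩
  have hDi : D i = ⊤ := by
    rw [eq_top_iff, ← hWtop, Subgroup.closure_le]
    intro w hw
    have hle : F w ≤ i :=
      le_trans (hi₀ (F w) (Finset.mem_image_of_mem F (Finset.mem_coe.1 hw))) hi
    exact (sup_le_sup_left (hmono _ _ hle) C : D (F w) ≤ D i) (hF w)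
  haveI := hn i
  haveI : (A ⊔ nf i).Normal := Subgroup.sup_normal _ _
  have hCi : Subgroup.closure (T : Set M) ⊔ (A ⊔ nf i) = ⊤ := by
    rw [← sup_assoc, ← hC]
    exact hDi
  have hmapTop : Subgroup.map (QuotientGroup.mk' (A ⊔ nf i))
      (Subgroup.closure (T : Set M) ⊔ (A ⊔ nf i)) = ⊤ := by
    rw [hCi, Subgroup.map_top_of_surjective _ (QuotientGroup.mk'_surjective _)]
  rw [Subgroup.map_sup,
    (Subgroup.map_eq_bot_iff _).2 (le_of_eq (QuotientGroup.ker_mk' _).symm),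
    sup_bot_eq, MonoidHom.map_closure] at hmapTop
  calc dGen (M ⧸ (A ⊔ nf i)) ≤ (T.image (QuotientGroup.mk' (A ⊔ nf i))).card :=
        dGen_le_card (by rw [Finset.coe_image]; exact hmapTop)
    _ ≤ T.card := Finset.card_image_le
    _ ≤ S.card := Finset.card_image_le
    _ = dGen (M ⧸ (A ⊔ n)) := by rw [hScard, dGen_eq_rank]

lemma pGradient_mem_ge (p : ℕ) (G : Type*) [Group G] :
    ∀ r ∈ {r : ℝ | ∃ H : Subgroup G, H.Normal ∧ (∃ k : ℕ, H.index = p ^ k) ∧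
      r = ((dp p H : ℝ) - 1) / (H.index : ℝ)}, -1 ≤ r := by
  rintro r ⟨H, -, -, rfl⟩
  rcases Nat.eq_zero_or_pos H.index with h | h
  · rw [h]; norm_num
  · have h1 : (1 : ℝ) ≤ (H.index : ℝ) := by exact_mod_cast h
    rw [le_div_iff₀ (by linarith : (0 : ℝ) < (H.index : ℝ))]
    have h2 : (0 : ℝ) ≤ (dp p H : ℝ) := Nat.cast_nonneg _
    nlinarith

lemma pGradient_bddBelow (p : ℕ) (G : Type*) [Group G] :
    BddBelow {r : ℝ | ∃ H : Subgroup G, H.Normal ∧ (∃ k : ℕ, H.index = p ^ k) ∧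
      r = ((dp p H : ℝ) - 1) / (H.index : ℝ)} :=
  ⟨-1, pGradient_mem_ge p G⟩

lemma pGradient_set_nonempty (p : ℕ) (G : Type*) [Group G] :
    {r : ℝ | ∃ H : Subgroup G, H.Normal ∧ (∃ k : ℕ, H.index = p ^ k) ∧
      r = ((dp p H : ℝ) - 1) / (H.index : ℝ)}.Nonempty :=
  ⟨_, ⊤, inferInstance, ⟨0, by rw [Subgroup.index_top, pow_zero]⟩, rfl⟩

lemma neg_one_le_pGradient (p : ℕ) (G : Type*) [Group G] : -1 ≤ pGradient p G :=
  le_csInf (pGradient_set_nonempty p G) (pGradient_mem_ge p G)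

lemma pGradient_le {G : Type*} [Group G] (p : ℕ) (H : Subgroup G) (h1 : H.Normal)
    (h2 : ∃ k : ℕ, H.index = p ^ k) :
    pGradient p G ≤ ((dp p H : ℝ) - 1) / (H.index : ℝ) :=
  csInf_le (pGradient_bddBelow p G) ⟨H, h1, h2, rfl⟩


/-- `limsup_i RG_p(G/N_i) ≤ RG_p(G/N)` along `atTop`. -/
theorem limsup_pGradient_le (G : Type*) [Group G] [Group.FG G] (p : ℕ) (hp : p.Prime)
    (I : Type*) [LinearOrder I] (Nf : I → Subgroup G) [hNf : ∀ i, (Nf i).Normal]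
    (hmono : ∀ i j : I, i ≤ j → Nf i ≤ Nf j)
    (N : Subgroup G) [hN : N.Normal] (hNU : (N : Set G) = ⋃ i, (Nf i : Set G))
    [Nonempty I] :
    Filter.limsup (fun i => pGradient p (G ⧸ Nf i)) Filter.atTop
      ≤ pGradient p (G ⧸ N) := by
  classical
  have hSne : {r : ℝ | ∃ H : Subgroup (G ⧸ N), H.Normal ∧ (∃ k : ℕ, H.index = p ^ k) ∧
      r = ((dp p H : ℝ) - 1) / (H.index : ℝ)}.Nonempty :=
    ⟨_, ⊤, inferInstance, ⟨0, by rw [Subgroup.index_top, pow_zero]⟩, rfl⟩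
  refine le_csInf hSne ?_
  rintro r ⟨H, hHnorm, ⟨k, hk⟩, rfl⟩
  haveI := hHnorm
  set π := QuotientGroup.mk' N with hπ
  set M := Subgroup.comap π H with hM
  haveI : M.Normal := Subgroup.normal_comap π
  have hMidx : M.index = H.index :=
    Subgroup.index_comap_of_surjective H (QuotientGroup.mk'_surjective N)
  haveI : M.FiniteIndex := ⟨by rw [hMidx, hk]; exact pow_ne_zero k hp.ne_zero⟩
  haveI : Group.FG M := Subgroup.fg_of_index_ne_zero M
  have hNle : ∀ i, Nf i ≤ N := fun i x hx => by
    rw [← SetLike.mem_coe, hNU]; exact Set.mem_iUnion.2 ⟨i, hx⟩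
  have hNM : N ≤ M := fun x hx => by
    rw [hM, Subgroup.mem_comap]
    have h1 : π x = 1 := (QuotientGroup.eq_one_iff x).2 hx
    rw [h1]; exact H.one_mem
  set A := pCommPow p M with hA
  set nf' : I → Subgroup M := fun i => (Nf i).subgroupOf M with hnf'
  set n' := N.subgroupOf M with hn'
  haveI : n'.Normal := Subgroup.normal_subgroupOf
  have hnorm' : ∀ i, (nf' i).Normal := fun i => by
    haveI := hNf i; exact Subgroup.normal_subgroupOf
  have hmono' : ∀ i j, i ≤ j → nf' i ≤ nf' j := fun i j hij x hx => by
    rw [hnf'] at hx ⊢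
    rw [Subgroup.mem_subgroupOf] at hx ⊢
    exact hmono i j hij hx
  have hNU' : ∀ y : G, y ∈ N ↔ ∃ i, y ∈ Nf i := fun y => by
    rw [← SetLike.mem_coe, hNU]
    simp [Set.mem_iUnion]
  have hcup : ∀ x : M, x ∈ n' ↔ ∃ i, x ∈ nf' i := fun x => by
    rw [hn', Subgroup.mem_subgroupOf]
    simp only [hnf', Subgroup.mem_subgroupOf]
    exact hNU' x
  obtain ⟨i₀, hcore⟩ := core_exists A nf' hnorm' hmono' n' hcup
  -- dp p H = dGen (M ⧸ (A ⊔ n'))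
  set g : ↥M →* (G ⧸ N) := π.comp M.subtype with hg
  have hgrange : g.range = H := by
    rw [hg, MonoidHom.range_comp, Subgroup.range_subtype, hM,
      Subgroup.map_comap_eq_self_of_surjective (QuotientGroup.mk'_surjective N)]
  have hgker : g.ker = n' := by
    ext x
    rw [MonoidHom.mem_ker, hn', Subgroup.mem_subgroupOf]
    exact QuotientGroup.eq_one_iff (x : G)
  haveI : g.ker.Normal := g.normal_ker
  have e1 : (↥H) ≃* ↥M ⧸ n' :=
    ((MulEquiv.subgroupCongr hgrange).symm.trans
      (QuotientGroup.quotientKerEquivRange g).symm).trans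
      (QuotientGroup.quotientMulEquivOfEq hgker)
  have hdpH : dp p ↥H = dGen (↥M ⧸ (A ⊔ n')) := by
    rw [dp_congr p e1, dp_quot p n']
  have hev : ∀ᶠ i in Filter.atTop,
      pGradient p (G ⧸ Nf i) ≤ ((dp p H : ℝ) - 1) / (H.index : ℝ) := by
    rw [Filter.eventually_atTop]
    refine ⟨i₀, fun i hi => ?_⟩
    haveI := hNf i
    haveI := hnorm' i
    set gi : ↥M →* (G ⧸ Nf i) := (QuotientGroup.mk' (Nf i)).comp M.subtype with hgi
    have hgiker : gi.ker = nf' i := by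
      ext x
      rw [MonoidHom.mem_ker]
      simp only [hnf']
      rw [Subgroup.mem_subgroupOf]
      exact QuotientGroup.eq_one_iff (x : G)
    have hgirange : gi.range = Subgroup.map (QuotientGroup.mk' (Nf i)) M := by
      rw [hgi, MonoidHom.range_comp, Subgroup.range_subtype]
    haveI hrn : gi.range.Normal := by
      rw [hgirange]
      exact Subgroup.Normal.map ‹M.Normal› _ (QuotientGroup.mk'_surjective _)
    have hidx : gi.range.index = p ^ k := by
      rw [hgirange]
      have h1 : Subgroup.comap (QuotientGroup.mk' (Nf i))
          (Subgroup.map (QuotientGroup.mk' (Nf i)) M) = M := by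
        rw [Subgroup.comap_map_eq, QuotientGroup.ker_mk']
        exact sup_eq_left.2 ((hNle i).trans hNM)
      have h2 := Subgroup.index_comap_of_surjective
        (Subgroup.map (QuotientGroup.mk' (Nf i)) M) (QuotientGroup.mk'_surjective (Nf i))
      rw [h1] at h2
      rw [← h2, hMidx, hk]
    haveI : gi.ker.Normal := gi.normal_ker
    have e2 : (↥gi.range) ≃* ↥M ⧸ nf' i :=
      ((QuotientGroup.quotientKerEquivRange gi).symm).trans
        (QuotientGroup.quotientMulEquivOfEq hgiker)
    have hdpi : dp p ↥gi.range = dGen (↥M ⧸ (A ⊔ nf' i)) := by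
      rw [dp_congr p e2, dp_quot p (nf' i)]
    refine le_trans (pGradient_le p gi.range hrn ⟨k, hidx⟩) ?_
    rw [hdpi, hdpH, hidx, hk]
    have hpos : (0 : ℝ) < ((p ^ k : ℕ) : ℝ) := by exact_mod_cast pow_pos hp.pos k
    exact (div_le_div_iff_of_pos_right hpos).2
      (sub_le_sub_right (Nat.cast_le.2 (hcore i hi)) 1)
  have hbound : Filter.IsBoundedUnder (· ≥ ·) Filter.atTop
      (fun i => pGradient p (G ⧸ Nf i)) :=
    ⟨-1, by
      rw [Filter.eventually_map]
      exact Filter.Eventually.of_forall fun i => neg_one_le_pGradient p (G ⧸ Nf i)⟩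
  exact Filter.limsup_le_of_le hbound.isCoboundedUnder_le hev
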